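/- arXiv:2507.11596 — 4 statements merged into one kernel-verified Lean document; each statement's English description precedes it below -/
import Mathlib

section
/- Let k ≥ 2 be an integer. For every n ∈ ℤ, the polynomial x^k + 1 divides x·𝓕_{n+k+1,k}(x) + 𝓕_{n,k}(x) in ℤ[x]. -/
open Polynomial

/-- For every `n ∈ ℤ`, `x^k + 1` divides `x·F(n+k+1) + F n` in `ℤ[x]`. -/
theorem fib_poly_period_div (k : ℕ) (hk : 2 ≤ k)
    (F : ℤ → Polynomial ℤ)
    (hrec : ∀ n : ℤ, F n = ∑ i ∈ Finset.range k, X ^ (k - 1 - i) * F (n - 1 - (i : ℤ)))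
    (hF1 : F 1 = 1)
    (hF0 : ∀ m : ℕ, m ≤ k - 2 → F (-(m : ℤ)) = 0) :
    ∀ n : ℤ, (X ^ k + 1) ∣ (X * F (n + k + 1) + F n) := by
  set d : Polynomial ℤ := X ^ k + 1 with hd
  have hF0' : ∀ n : ℤ, 2 - (k : ℤ) ≤ n → n ≤ 0 → F n = 0 := by
    intro n h1 h2
    obtain ⟨m, hm⟩ : ∃ m : ℕ, n = -(m : ℤ) := ⟨(-n).toNat, by omega⟩
    subst hm
    exact hF0 _ (by omega)
  have hF2 : F 2 = X ^ (k - 1) := by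
    rw [hrec 2]
    obtain ⟨k', hkk⟩ : ∃ k', k = k' + 1 := ⟨k - 1, by omega⟩
    subst hkk
    rw [Finset.sum_range_succ']
    have h0 : (2 : ℤ) - 1 - ((0 : ℕ) : ℤ) = 1 := by norm_num
    rw [h0, hF1, mul_one]
    have hz : ∀ i ∈ Finset.range k',
        X ^ (k' + 1 - 1 - (i + 1)) * F (2 - 1 - ((i + 1 : ℕ) : ℤ)) = 0 := by
      intro i hi
      simp only [Finset.mem_range] at hi
      have : F (2 - 1 - ((i + 1 : ℕ) : ℤ)) = 0 := hF0' _ (by omega) (by omega)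
      rw [this, mul_zero]
    rw [Finset.sum_congr rfl hz]
    simp
  have hFmid : ∀ m : ℕ, 3 ≤ m → m ≤ k + 1 → d ∣ F m := by
    intro m
    induction m using Nat.strong_induction_on with
    | _ m IH =>
      intro hm3 hmk
      rw [hrec m]
      have h2mem : m - 2 ∈ Finset.range k := Finset.mem_range.mpr (by omega)
      rw [← Finset.add_sum_erase _ _ h2mem]
      have h3mem : m - 3 ∈ (Finset.range k).erase (m - 2) :=
        Finset.mem_erase.mpr ⟨by omega, Finset.mem_range.mpr (by omega)⟩
      rw [← Finset.add_sum_erase _ _ h3mem]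
      have e1 : (m : ℤ) - 1 - ((m - 2 : ℕ) : ℤ) = 1 := by omega
      have e2 : (m : ℤ) - 1 - ((m - 3 : ℕ) : ℤ) = 2 := by omega
      rw [e1, e2, hF1, hF2, mul_one, ← add_assoc]
      have hAB : X ^ (k - 1 - (m - 2)) + X ^ (k - 1 - (m - 3)) * (X : Polynomial ℤ) ^ (k - 1)
          = d * X ^ (k + 1 - m) := by
        rw [hd, show k - 1 - (m - 2) = k + 1 - m from by omega,
          show k - 1 - (m - 3) = k + 2 - m from by omega, ← pow_add,
          show k + 2 - m + (k - 1) = k + (k + 1 - m) from by omega, pow_add]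
        ring
      have hS : d ∣ ∑ i ∈ ((Finset.range k).erase (m - 2)).erase (m - 3),
          X ^ (k - 1 - i) * F ((m : ℤ) - 1 - (i : ℤ)) := by
        apply Finset.dvd_sum
        intro i hi
        simp only [Finset.mem_erase, Finset.mem_range] at hi
        obtain ⟨hne3, hne2, hik⟩ := hi
        by_cases hcase : i + 4 ≤ m
        · have harg : (m : ℤ) - 1 - (i : ℤ) = ((m - 1 - i : ℕ) : ℤ) := by omega
          rw [harg]
          exact Dvd.dvd.mul_left (IH (m - 1 - i) (by omega) (by omega) (by omega)) _
        · have : F ((m : ℤ) - 1 - (i : ℤ)) = 0 := hF0' _ (by omega) (by omega)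
          rw [this, mul_zero]
          exact dvd_zero _
      exact dvd_add ⟨_, hAB⟩ hS
  have hFk2 : d ∣ X * F ((k : ℤ) + 2) + 1 := by
    rw [hrec ((k : ℤ) + 2)]
    have hmem : k - 1 ∈ Finset.range k := Finset.mem_range.mpr (by omega)
    rw [← Finset.add_sum_erase _ _ hmem]
    have e : (k : ℤ) + 2 - 1 - ((k - 1 : ℕ) : ℤ) = 2 := by omega
    rw [e, hF2, show k - 1 - (k - 1) = 0 from by omega, pow_zero, one_mul]
    have hS : d ∣ ∑ i ∈ (Finset.range k).erase (k - 1),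
        X ^ (k - 1 - i) * F ((k : ℤ) + 2 - 1 - (i : ℤ)) := by
      apply Finset.dvd_sum
      intro i hi
      simp only [Finset.mem_erase, Finset.mem_range] at hi
      have harg : (k : ℤ) + 2 - 1 - (i : ℤ) = ((k + 1 - i : ℕ) : ℤ) := by omega
      rw [harg]
      exact Dvd.dvd.mul_left (hFmid (k + 1 - i) (by omega) (by omega)) _
    obtain ⟨c, hc⟩ := hS
    rw [hc]
    have hxk : (X : Polynomial ℤ) * X ^ (k - 1) = X ^ k := by
      rw [show (X : Polynomial ℤ) ^ k = X ^ (k - 1) * X from by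
        rw [← pow_succ]; congr 1; omega]
      ring
    have : X * (X ^ (k - 1) + d * c) + 1 = d * (1 + X * c) := by
      rw [mul_add, hxk, hd]
      ring
    rw [this]
    exact Dvd.intro _ rfl
  have hPrec : ∀ n : ℤ, X * F (n + (k : ℤ) + 1) + F n
      = ∑ i ∈ Finset.range k,
          X ^ (k - 1 - i) * (X * F ((n - 1 - (i : ℤ)) + (k : ℤ) + 1) + F (n - 1 - (i : ℤ))) := by
    intro n
    rw [hrec (n + (k : ℤ) + 1), hrec n, Finset.mul_sum, ← Finset.sum_add_distrib]
    apply Finset.sum_congr rfl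
    intro i _
    have he : n + (k : ℤ) + 1 - 1 - (i : ℤ) = n - 1 - (i : ℤ) + (k : ℤ) + 1 := by ring
    rw [he]
    ring
  have hfwd : ∀ n : ℤ,
      (∀ i : ℕ, i < k → d ∣ X * F ((n - 1 - (i : ℤ)) + (k : ℤ) + 1) + F (n - 1 - (i : ℤ))) →
      d ∣ X * F (n + (k : ℤ) + 1) + F n := by
    intro n h
    rw [hPrec n]
    exact Finset.dvd_sum fun i hi => ((h i (Finset.mem_range.mp hi)).mul_left _)
  have hbwd : ∀ n : ℤ,
      (∀ j : ℕ, 1 ≤ j → j ≤ k → d ∣ X * F ((n + (j : ℤ)) + (k : ℤ) + 1) + F (n + (j : ℤ))) →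
      d ∣ X * F (n + (k : ℤ) + 1) + F n := by
    intro n h
    have hrec' := hPrec (n + (k : ℤ))
    have hmem : k - 1 ∈ Finset.range k := Finset.mem_range.mpr (by omega)
    rw [← Finset.add_sum_erase _ _ hmem] at hrec'
    have e0 : n + (k : ℤ) - 1 - ((k - 1 : ℕ) : ℤ) = n := by omega
    rw [e0, show k - 1 - (k - 1) = 0 from by omega, pow_zero, one_mul] at hrec'
    rw [eq_sub_of_add_eq hrec'.symm]
    apply dvd_sub
    · have h0 := h k (by omega) le_rfl
      exact h0
    · apply Finset.dvd_sum
      intro i hi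
      simp only [Finset.mem_erase, Finset.mem_range] at hi
      have h0 := h (k - 1 - i) (by omega) (by omega)
      have e : n + (k : ℤ) - 1 - (i : ℤ) = n + ((k - 1 - i : ℕ) : ℤ) := by omega
      rw [e]
      exact h0.mul_left _
  have hwindow : ∀ j : ℕ, ∀ n : ℤ, 2 - (k : ℤ) - (j : ℤ) ≤ n → n ≤ 1 + (j : ℤ) →
      d ∣ X * F (n + (k : ℤ) + 1) + F n := by
    intro j
    induction j with
    | zero =>
      intro n h1 h2
      by_cases hn1 : n = 1
      · subst hn1
        rw [show (1 : ℤ) + (k : ℤ) + 1 = (k : ℤ) + 2 from by ring, hF1]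
        exact hFk2
      · have hn0 : F n = 0 := hF0' n (by omega) (by omega)
        rw [hn0, add_zero, show n + (k : ℤ) + 1 = (((n + k + 1).toNat : ℕ) : ℤ) from by omega]
        exact ((hFmid _ (by omega) (by omega)).mul_left X)
    | succ j IH =>
      intro n h1 h2
      by_cases hcase1 : n ≤ 1 + (j : ℤ)
      · by_cases hcase2 : 2 - (k : ℤ) - (j : ℤ) ≤ n
        · exact IH n hcase2 hcase1
        · apply hbwd
          intro i hi1 hik
          apply IH <;> omega
      · apply hfwd
        intro i hik
        apply IH <;> omega
  intro n
  exact hwindow (n.natAbs + k) n (by omega) (by omega)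
end

section
/- Let k ≥ 2 be an integer. For every integer n with 2 ≤ n ≤ k + 1, the k-generalized Fibonacci polynomial satisfies 𝓕_{n,k}(x) = x^{k+1−n} · (x^k + 1)^{n−2}. -/
open Polynomial

/-- For `2 ≤ n ≤ k + 1`, the `k`-generalized Fibonacci polynomial satisfies
`F n = x^(k+1-n) · (x^k + 1)^(n-2)`. -/
theorem fib_poly_small_index_factored (k : ℕ) (hk : 2 ≤ k)
    (F : ℤ → Polynomial ℤ)
    (hrec : ∀ n : ℤ, F n = ∑ i ∈ Finset.range k, X ^ (k - 1 - i) * F (n - 1 - (i : ℤ)))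
    (hF1 : F 1 = 1)
    (hF0 : ∀ m : ℕ, m ≤ k - 2 → F (-(m : ℤ)) = 0) :
    ∀ n : ℕ, 2 ≤ n → n ≤ k + 1 →
      F (n : ℤ) = X ^ (k + 1 - n) * (X ^ k + 1) ^ (n - 2) := by
  intro n
  induction n using Nat.strong_induction_on with
  | _ n IH =>
    intro h2 hkn
    rw [hrec]
    have hsub : Finset.range (n-1) ⊆ Finset.range k := by
      apply Finset.range_subset_range.2; omega
    rw [← Finset.sum_subset hsub (by
      intro i hi hni
      simp only [Finset.mem_range] at hi hni
      have hcast : ((n:ℤ) - 1 - i) = -((i - (n-1) : ℕ) : ℤ) := by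
        push_cast; omega
      rw [hcast, hF0 _ (by omega), mul_zero])]
    have hn1 : n - 1 = (n - 2) + 1 := by omega
    rw [hn1, Finset.sum_range_succ]
    have hlast : ((n:ℤ) - 1 - (n - 2 : ℕ)) = ((1:ℕ):ℤ) := by push_cast; omega
    rw [hlast]
    push_cast at hF1 ⊢
    rw [hF1, mul_one]
    have hterm : ∀ i ∈ Finset.range (n-2), X ^ (k-1-i) * F ((n:ℤ) - 1 - i) =
        X ^ (2*k+1-n) * (X ^ k + 1) ^ (n-3-i) := by
      intro i hi
      simp only [Finset.mem_range] at hi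
      have hj : ((n:ℤ) - 1 - i) = ((n-1-i : ℕ) : ℤ) := by push_cast; omega
      rw [hj, IH (n-1-i) (by omega) (by omega) (by omega)]
      rw [← mul_assoc, ← pow_add]
      congr 2 <;> omega
    rw [Finset.sum_congr rfl hterm, ← Finset.mul_sum]
    have hrefl := Finset.sum_range_reflect (fun t => (X ^ k + 1 : Polynomial ℤ) ^ t) (n-2)
    have hidx : ∀ i ∈ Finset.range (n-2), (X ^ k + 1 : Polynomial ℤ) ^ (n-3-i) =
        (X ^ k + 1 : Polynomial ℤ) ^ (n-2-1-i) := by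
      intro i hi
      have h3 : n-3-i = n-2-1-i := by omega
      rw [h3]
    rw [Finset.sum_congr rfl hidx, hrefl]
    have hgeom := geom_sum_mul (X ^ k + 1 : Polynomial ℤ) (n-2)
    have hx : (X ^ k + 1 : Polynomial ℤ) - 1 = X ^ k := by ring
    rw [hx] at hgeom
    have hpow : X ^ (2*k+1-n) = (X : Polynomial ℤ) ^ (k+1-n) * X ^ k := by
      rw [← pow_add]; congr 1; omega
    have hlastpow : (k : ℕ) - 1 - (n - 2) = k + 1 - n := by omega
    rw [hpow, hlastpow]
    linear_combination X ^ (k+1-n) * hgeom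
end

section
/- Let k ≥ 3 be an integer. (i) For every integer s with 1 ≤ s ≤ k − 2, 𝓕_{−(sk−1),k}(x) = (x^k + 1)^{s−1}. (ii) For every integer s with 0 ≤ s ≤ k − 2, 𝓕_{−(s(k+1)−1),k}(x) = (−1)^s · x^s. -/
open Polynomial

noncomputable def phiAux (k s j : ℕ) : Polynomial ℤ :=
  (-1) ^ j * X ^ j * (((s-1).choose j : Polynomial ℤ) * (X^k+1)^(s-1-j)
    + (if s = 0 ∨ j = 0 then 0 else (((s-1).choose (j-1) : ℕ) : Polynomial ℤ)) * (X^k+1)^(s-j))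

lemma phiAux_zero {k s j : ℕ} (h : s < j) : phiAux k s j = 0 := by
  have h1 : (s-1).choose j = 0 := Nat.choose_eq_zero_of_lt (by omega)
  rcases Nat.eq_zero_or_pos s with hs | hs
  · subst hs; simp [phiAux, Nat.choose_eq_zero_of_lt h]
  · have h2 : (s-1).choose (j-1) = 0 := Nat.choose_eq_zero_of_lt (by omega)
    simp [phiAux, h1, h2]

lemma A_eq (k s : ℕ) (j : ℕ) :
    ∑ t ∈ Finset.range (j+1), X^(j-t) * phiAux k (s+1) t
      = (-1)^j * X^j * ((s.choose j : ℕ) : Polynomial ℤ) * (X^k+1)^(s-j) := by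
  induction j with
  | zero => simp [phiAux]
  | succ j ih =>
    rw [Finset.sum_range_succ]
    have hstep : ∀ t ∈ Finset.range (j+1),
        X^(j+1-t) * phiAux k (s+1) t = X * (X^(j-t) * phiAux k (s+1) t) := by
      intro t ht
      rw [Finset.mem_range] at ht
      rw [show j+1-t = (j-t)+1 from by omega, pow_succ]; ring
    rw [Finset.sum_congr rfl hstep, ← Finset.mul_sum, ih]
    simp only [Nat.sub_self, pow_zero, one_mul, phiAux, Nat.add_sub_cancel]
    rw [if_neg (by omega)]
    rw [show s+1-(j+1) = s-j from by omega]
    ring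

lemma ALG (k : ℕ) (hk : 3 ≤ k) (s j : ℕ) (hs : s + 1 ≤ k - 2) (hj : j ≤ k - 1) :
    phiAux k s j = (∑ i ∈ Finset.range (k-1), X^(k-1-i) *
        (if j+1+i < k then phiAux k s (j+1+i) else phiAux k (s+1) (j+1+i-k)))
      + phiAux k (s+1) j := by
  have hsplit : (∑ i ∈ Finset.range (k-1), X^(k-1-i) *
        (if j+1+i < k then phiAux k s (j+1+i) else phiAux k (s+1) (j+1+i-k)))
      = (∑ i ∈ Finset.range (k-1-j), X^(k-1-i) * phiAux k s (j+1+i))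
        + (∑ t ∈ Finset.range j, X^(j-t) * phiAux k (s+1) t) := by
    conv_lhs => rw [Finset.range_eq_Ico]
    rw [← Finset.sum_Ico_consecutive _ (Nat.zero_le (k-1-j)) (by omega : k-1-j ≤ k-1)]
    congr 1
    · rw [← Finset.range_eq_Ico]
      refine Finset.sum_congr rfl ?_
      intro i hi
      rw [Finset.mem_range] at hi
      rw [if_pos (by omega)]
    · rw [Finset.sum_Ico_eq_sum_range, show (k-1) - (k-1-j) = j from by omega]
      refine Finset.sum_congr rfl ?_
      intro t ht
      rw [Finset.mem_range] at ht
      rw [if_neg (by omega)]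
      rw [show k-1-(k-1-j+t) = j - t from by omega,
        show j+1+(k-1-j+t)-k = t from by omega]
  rw [hsplit, add_assoc]
  have hA1 : (∑ t ∈ Finset.range j, X^(j-t) * phiAux k (s+1) t) + phiAux k (s+1) j
      = (-1)^j * X^j * ((s.choose j : ℕ) : Polynomial ℤ) * (X^k+1)^(s-j) := by
    have h := A_eq k s j
    rw [Finset.sum_range_succ, Nat.sub_self, pow_zero, one_mul] at h
    exact h
  rw [hA1]
  rcases Nat.eq_zero_or_pos s with rfl | hspos
  · have hc1 : (∑ i ∈ Finset.range (k-1-j), X^(k-1-i) * phiAux k 0 (j+1+i)) = 0 := by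
      refine Finset.sum_eq_zero ?_
      intro i _
      rw [phiAux_zero (by omega), mul_zero]
    rw [hc1, zero_add]
    rcases Nat.eq_zero_or_pos j with rfl | hjpos
    · simp [phiAux]
    · rw [phiAux_zero (by omega), Nat.choose_eq_zero_of_lt (by omega : (0:ℕ) < j)]
      simp
  · obtain ⟨t, rfl⟩ : ∃ t, s = t+1 := ⟨s-1, by omega⟩
    have hfull0 : ∑ l ∈ Finset.range k, X^(k-1-l) * phiAux k (t+1) l = 0 := by
      have h := A_eq k t (k-1)
      rw [show (k-1)+1 = k from by omega] at h
      rw [h, Nat.choose_eq_zero_of_lt (by omega : t < k-1)]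
      simp
    have hsplit2 : ∑ l ∈ Finset.Ico (j+1) k, X^(k-1-l) * phiAux k (t+1) l
        = - ∑ l ∈ Finset.range (j+1), X^(k-1-l) * phiAux k (t+1) l := by
      rw [Finset.range_eq_Ico,
        ← Finset.sum_Ico_consecutive _ (Nat.zero_le (j+1)) (by omega : j+1 ≤ k),
        ← Finset.range_eq_Ico] at hfull0
      exact eq_neg_of_add_eq_zero_right hfull0
    have hchunk : (∑ i ∈ Finset.range (k-1-j), X^(k-1-i) * phiAux k (t+1) (j+1+i))
        = X^(j+1) * ∑ l ∈ Finset.Ico (j+1) k, X^(k-1-l) * phiAux k (t+1) l := by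
      rw [Finset.sum_Ico_eq_sum_range, show k - (j+1) = k-1-j from by omega, Finset.mul_sum]
      refine Finset.sum_congr rfl ?_
      intro i hi
      rw [Finset.mem_range] at hi
      rw [← mul_assoc, ← pow_add, show (j+1)+(k-1-(j+1+i)) = k-1-i from by omega]
    have hlow : ∑ l ∈ Finset.range (j+1), X^(k-1-l) * phiAux k (t+1) l
        = X^(k-1-j) * ((-1)^j * X^j * ((t.choose j : ℕ) : Polynomial ℤ) * (X^k+1)^(t-j)) := by
      rw [← A_eq k t j, Finset.mul_sum]
      refine Finset.sum_congr rfl ?_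
      intro l hl
      rw [Finset.mem_range] at hl
      rw [← mul_assoc, ← pow_add, show (k-1-j)+(j-l) = k-1-l from by omega]
    rw [hchunk, hsplit2, hlow]
    have hxp : X^(j+1) * (X^(k-1-j) : Polynomial ℤ) = X^k := by
      rw [← pow_add]; congr 1; omega
    have hv : ((t.choose j : ℕ) : Polynomial ℤ) * (X^k+1)^(t-j) * (X^k+1)
        = ((t.choose j : ℕ) : Polynomial ℤ) * (X^k+1)^(t+1-j) := by
      rcases le_or_gt j t with h | h
      · rw [mul_assoc, ← pow_succ, show (t-j)+1 = t+1-j from by omega]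
      · simp [Nat.choose_eq_zero_of_lt h]
    have hpascal : (((t+1).choose j : ℕ) : Polynomial ℤ)
        = ((t.choose j : ℕ) : Polynomial ℤ)
          + (if t+1 = 0 ∨ j = 0 then 0 else ((t.choose (j-1) : ℕ) : Polynomial ℤ)) := by
      rcases Nat.eq_zero_or_pos j with rfl | hjpos
      · simp
      · obtain ⟨j', rfl⟩ : ∃ j', j = j'+1 := ⟨j-1, by omega⟩
        rw [if_neg (by omega), Nat.add_sub_cancel, Nat.choose_succ_succ' t j']
        push_cast
        ring
    simp only [phiAux, Nat.add_sub_cancel]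
    linear_combination (-((-1:Polynomial ℤ)^j * X^j * (X^k+1)^(t+1-j))) * hpascal
      + ((-1:Polynomial ℤ)^j * X^j) * hv
      + ((-1:Polynomial ℤ)^j * X^j * ((t.choose j : ℕ) : Polynomial ℤ) * (X^k+1)^(t-j)) * hxp

lemma main_lemma (k : ℕ) (hk : 3 ≤ k) (F : ℤ → Polynomial ℤ)
    (hrec : ∀ n : ℤ, F n = ∑ i ∈ Finset.range k, X ^ (k - 1 - i) * F (n - 1 - (i : ℤ)))
    (hF1 : F 1 = 1)
    (hF0 : ∀ m : ℕ, m ≤ k - 2 → F (-(m : ℤ)) = 0) :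
    ∀ N s j : ℕ, s * k + j = N → s ≤ k - 2 → j ≤ k - 1 →
      F (1 - ((s * k + j : ℕ) : ℤ)) = phiAux k s j := by
  intro N
  induction N using Nat.strong_induction_on with
  | _ N IH =>
  intro s j hN hs hj
  subst hN
  rcases Nat.eq_zero_or_pos s with rfl | hspos
  · -- base block: initial values
    simp only [Nat.zero_mul, Nat.zero_add]
    rcases Nat.eq_zero_or_pos j with rfl | hjpos
    · simpa [phiAux] using hF1
    · have h0 : F (1 - (j:ℤ)) = 0 := by
        have h1 := hF0 (j-1) (by omega)
        have h2 : -(((j-1 : ℕ)) : ℤ) = 1 - (j : ℤ) := by omega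
        rwa [h2] at h1
      rw [h0, phiAux_zero (by omega)]
  · obtain ⟨s', rfl⟩ : ∃ s', s = s'+1 := ⟨s-1, by omega⟩
    have hrec' := hrec (1 - ((s'*k + j : ℕ) : ℤ))
    rw [show Finset.range k = Finset.range ((k-1)+1) from by congr 1; omega,
      Finset.sum_range_succ] at hrec'
    have harg2 : (1 - ((s'*k+j:ℕ):ℤ)) - 1 - (((k-1:ℕ)):ℤ) = 1 - (((s'+1)*k + j : ℕ):ℤ) := by
      rw [show (((k-1:ℕ)):ℤ) = (k:ℤ)-1 from by omega]
      push_cast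
      ring
    rw [harg2, Nat.sub_self, pow_zero, one_mul] at hrec'
    have hterm : ∀ i ∈ Finset.range (k-1),
        X^(k-1-i) * F ((1 - ((s'*k + j : ℕ) : ℤ)) - 1 - (i:ℤ))
          = X^(k-1-i) * (if j+1+i < k then phiAux k s' (j+1+i)
              else phiAux k (s'+1) (j+1+i-k)) := by
      intro i hi
      rw [Finset.mem_range] at hi
      congr 1
      have harg : (1 - ((s'*k+j:ℕ):ℤ)) - 1 - (i:ℤ) = 1 - ((s'*k + (j+1+i) : ℕ):ℤ) := by
        push_cast; ring
      rw [harg]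
      by_cases hc : j+1+i < k
      · rw [if_pos hc]
        refine IH (s'*k + (j+1+i)) ?_ s' (j+1+i) rfl (by omega) (by omega)
        have h2 : (s'+1)*k + j = s'*k + (k+j) := by ring
        rw [h2]
        exact Nat.add_lt_add_left (by omega) _
      · rw [if_neg hc]
        have hidx : s'*k + (j+1+i) = (s'+1)*k + (j+1+i-k) := by
          have h : (s'+1)*k = s'*k + k := by ring
          rw [h, Nat.add_assoc, Nat.add_assoc]
          congr 1
          omega
        rw [hidx]
        exact IH ((s'+1)*k + (j+1+i-k))
          (Nat.add_lt_add_left (by omega) _) (s'+1) (j+1+i-k) rfl hs (by omega)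
    rw [Finset.sum_congr rfl hterm] at hrec'
    have hFn : F (1 - ((s'*k + j : ℕ) : ℤ)) = phiAux k s' j := by
      refine IH (s'*k + j) ?_ s' j rfl (by omega) hj
      have h2 : (s'+1)*k + j = s'*k + (k+j) := by ring
      rw [h2]
      exact Nat.add_lt_add_left (by omega) _
    rw [hFn] at hrec'
    have hALG := ALG k hk s' j hs hj
    exact add_left_cancel ((hrec'.symm).trans hALG)

/-- For `k ≥ 3`: (i) for `1 ≤ s ≤ k-2`, `F(-(sk-1)) = (x^k+1)^(s-1)`;
(ii) for `0 ≤ s ≤ k-2`, `F(-(s(k+1)-1)) = (-1)^s x^s`. -/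
theorem fib_poly_block_boundaries (k : ℕ) (hk : 3 ≤ k)
    (F : ℤ → Polynomial ℤ)
    (hrec : ∀ n : ℤ, F n = ∑ i ∈ Finset.range k, X ^ (k - 1 - i) * F (n - 1 - (i : ℤ)))
    (hF1 : F 1 = 1)
    (hF0 : ∀ m : ℕ, m ≤ k - 2 → F (-(m : ℤ)) = 0) :
    (∀ s : ℕ, 1 ≤ s → s ≤ k - 2 →
      F (-((s : ℤ) * k - 1)) = (X ^ k + 1) ^ (s - 1)) ∧
    (∀ s : ℕ, s ≤ k - 2 →
      F (-((s : ℤ) * (k + 1) - 1)) = (-1) ^ s * X ^ s) := by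
  have main := main_lemma k hk F hrec hF1 hF0
  constructor
  · intro s hs1 hs2
    have h := main (s*k+0) s 0 rfl hs2 (by omega)
    rw [show (-((s : ℤ) * k - 1)) = 1 - ((s*k+0 : ℕ):ℤ) from by push_cast; ring] at *
    rw [h]
    simp [phiAux]
  · intro s hs2
    have h := main (s*k+s) s s rfl hs2 (by omega)
    rw [show (-((s : ℤ) * (k+1) - 1)) = 1 - ((s*k+s : ℕ):ℤ) from by push_cast; ring]
    rw [h]
    rcases Nat.eq_zero_or_pos s with rfl | hspos
    · simp [phiAux]
    · obtain ⟨s', rfl⟩ : ∃ s', s = s'+1 := ⟨s-1, by omega⟩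
      simp only [phiAux, Nat.add_sub_cancel]
      rw [if_neg (by omega), Nat.choose_eq_zero_of_lt (by omega : s' < s'+1),
        Nat.choose_self, Nat.sub_self, pow_zero]
      push_cast
      ring
end

section
/- Let k ≥ 2 and n ≥ 3 be integers. (i) If k is even, then 𝓕_{n,k}(t) ≠ 0 for every real number t ≠ 0; that is, 𝓕_{n,k} has no nonzero real roots. (ii) If k is odd, then 𝓕_{n,k}(t) > 0 for every real number t > 0; that is, 𝓕_{n,k} has no positive real roots. -/
open Polynomial

private lemma int_strong_ind (a : ℤ) (P : ℤ → Prop)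
    (h : ∀ m, a ≤ m → (∀ j, a ≤ j → j < m → P j) → P m) :
    ∀ m, a ≤ m → P m := by
  have key : ∀ N : ℕ, ∀ m, a ≤ m → m < a + N → P m := by
    intro N
    induction N with
    | zero => intro m h1 h2; omega
    | succ N ih =>
      intro m h1 h2
      exact h m h1 (fun j hj1 hj2 => ih j hj1 (by omega))
  intro m hm
  exact key ((m - a).toNat + 1) m hm (by omega)

private lemma neg_one_zpow_eq (a b : ℤ) (h : Even (a - b)) : (-1:ℝ)^a = (-1:ℝ)^b := by
  have h1 : (-1:ℝ)^a = (-1:ℝ)^b * (-1:ℝ)^(a-b) := by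
    rw [← zpow_add₀ (by norm_num : (-1:ℝ) ≠ 0)]
    congr 1; ring
  rw [h1, h.neg_one_zpow, mul_one]

/-- For `n ≥ 3`: (i) if `k` is even, `F n` has no nonzero real roots;
(ii) if `k` is odd, `F n` has no positive real roots. -/
theorem fib_poly_real_roots (k : ℕ) (hk : 2 ≤ k)
    (F : ℤ → Polynomial ℤ)
    (hrec : ∀ n : ℤ, F n = ∑ i ∈ Finset.range k, X ^ (k - 1 - i) * F (n - 1 - (i : ℤ)))
    (hF1 : F 1 = 1)
    (hF0 : ∀ m : ℕ, m ≤ k - 2 → F (-(m : ℤ)) = 0)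
    (n : ℤ) (hn : 3 ≤ n) :
    (Even k → ∀ t : ℝ, t ≠ 0 → Polynomial.aeval t (F n) ≠ 0) ∧
    (Odd k → ∀ t : ℝ, 0 < t → 0 < Polynomial.aeval t (F n)) := by
  -- vanishing of F m for 2 - k ≤ m ≤ 0
  have hzero : ∀ m : ℤ, 2 - (k:ℤ) ≤ m → m ≤ 0 → F m = 0 := by
    intro m h1 h2
    have := hF0 (-m).toNat (by omega)
    rwa [show (-(((-m).toNat : ℤ))) = m by omega] at this
  -- positivity for t > 0
  have hpos : ∀ t : ℝ, 0 < t → ∀ m : ℤ, 2 - (k:ℤ) ≤ m →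
      0 ≤ aeval t (F m) ∧ (1 ≤ m → 0 < aeval t (F m)) := by
    intro t ht
    apply int_strong_ind
    intro m hm IH
    rcases lt_or_ge m 2 with hm2 | hm2
    · rcases lt_or_ge m 1 with hm1 | hm1
      · rw [hzero m hm (by omega)]
        refine ⟨by simp, fun h => by omega⟩
      · have hm1' : m = 1 := by omega
        subst hm1'
        rw [hF1]
        simp
    · have hsum : aeval t (F m) =
          ∑ i ∈ Finset.range k, t ^ (k - 1 - i) * aeval t (F (m - 1 - (i:ℤ))) := by
        rw [hrec m]
        simp [map_sum]
      have hnn : ∀ i ∈ Finset.range k,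
          0 ≤ t ^ (k - 1 - i) * aeval t (F (m - 1 - (i:ℤ))) := by
        intro i hi
        rw [Finset.mem_range] at hi
        exact mul_nonneg (pow_nonneg ht.le _)
          ((IH (m - 1 - i) (by omega) (by omega)).1)
      have h0 : 0 < t ^ (k - 1 - 0) * aeval t (F (m - 1 - ((0:ℕ):ℤ))) := by
        apply mul_pos (pow_pos ht _)
        have := (IH (m - 1 - ((0:ℕ):ℤ)) (by omega) (by omega)).2 (by omega)
        exact this
      have hlt : 0 < aeval t (F m) := by
        rw [hsum]
        calc (0:ℝ) < t ^ (k - 1 - 0) * aeval t (F (m - 1 - ((0:ℕ):ℤ))) := h0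
          _ ≤ _ := Finset.single_le_sum hnn (Finset.mem_range.mpr (by omega))
      exact ⟨hlt.le, fun _ => hlt⟩
  -- sign identity for even k
  have hsign : Even k → ∀ t : ℝ, ∀ m : ℤ, 2 - (k:ℤ) ≤ m →
      aeval (-t) (F m) = (-1:ℝ)^(m+1) * aeval t (F m) := by
    intro hke t
    apply int_strong_ind
    intro m hm IH
    rcases lt_or_ge m 2 with hm2 | hm2
    · rcases lt_or_ge m 1 with hm1 | hm1
      · rw [hzero m hm (by omega)]; simp
      · have hm1' : m = 1 := by omega
        subst hm1'
        rw [hF1]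
        norm_num
    · rw [hrec m]
      simp only [map_sum, map_mul, map_pow, aeval_X]
      rw [Finset.mul_sum]
      apply Finset.sum_congr rfl
      intro i hi
      rw [Finset.mem_range] at hi
      rw [IH (m - 1 - i) (by omega) (by omega)]
      rw [show m - 1 - (i:ℤ) + 1 = m - i by ring]
      have he : (-t) ^ (k - 1 - i) = (-1:ℝ)^((k - 1 - i : ℕ):ℤ) * t ^ (k - 1 - i) := by
        rw [zpow_natCast, ← neg_one_mul, mul_pow]
      have hparity : (-1:ℝ)^(((k - 1 - i : ℕ):ℤ)) * (-1:ℝ)^(m - i)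
          = (-1:ℝ)^(m+1) := by
        rw [← zpow_add₀ (by norm_num : (-1:ℝ) ≠ 0)]
        apply neg_one_zpow_eq
        have hcast : ((k - 1 - i : ℕ):ℤ) = (k:ℤ) - 1 - i := by omega
        rw [hcast]
        obtain ⟨c, hc⟩ := hke
        refine ⟨(c:ℤ) - i - 1, by omega⟩
      rw [he, ← hparity]
      ring
  constructor
  · intro hke t ht
    rcases lt_or_gt_of_ne ht with hlt | hgt
    · have h1 : aeval t (F n) = aeval (-(-t)) (F n) := by ring_nf
      have h2 := hsign hke (-t) n (by omega)
      have h3 := (hpos (-t) (by linarith) n (by omega)).2 (by omega)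
      rw [h1, h2]
      positivity
    · exact ne_of_gt ((hpos t hgt n (by omega)).2 (by omega))
  · intro _ t ht
    exact (hpos t ht n (by omega)).2 (by omega)
end
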